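/- Fix integers n ≥ 1 and real s > 0, and for each integer t ≥ 2 define u_k = k+1 if t ≤ k ≤ t², and u_k = 0 otherwise. Then, as t → ∞, Σ_{k=t}^{t²} n²/(k+n+1) = n² log t + O(1) and s n Σ_{k=t}^{t²−n} (k+1)/((k+n+1+s/2)(k+1+s/2)) = s n log t + O(1). Consequently, if for all t, Σ_{k=t}^{t²} n²/(k+n+1) ≥ s n C Σ_{k=t}^{t²−n} (k+1)/((k+n+1+s/2)(k+1+s/2)) holds for some constant C ≥ 0, then C ≤ n/s. -/

import Mathlib

open Finset Real

set_option maxHeartbeats 1000000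

lemma tele (f : ℕ → ℝ) (a b : ℕ) (h : a ≤ b + 1) :
    ∑ k ∈ Icc a b, (f (k+1) - f k) = f (b+1) - f a := by
  rw [← Finset.Ico_add_one_right_eq_Icc, Finset.sum_Ico_eq_sum_range]
  simp only [Nat.add_assoc]
  rw [Finset.sum_range_sub (fun i => f (a + i))]
  have h2 : a + (b + 1 - a) = b + 1 := by omega
  rw [h2]
  simp

lemma log_succ_le (x : ℝ) (hx : 0 < x) : Real.log (x+1) - Real.log x ≤ 1/x := by
  rw [← Real.log_div (by positivity) (by positivity)]
  have := Real.log_le_sub_one_of_pos (x := (x+1)/x) (by positivity)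
  calc Real.log ((x+1)/x) ≤ (x+1)/x - 1 := this
    _ = 1/x := by field_simp; ring
lemma le_log_succ (x : ℝ) (hx : 0 < x) : 1/(x+1) ≤ Real.log (x+1) - Real.log x := by
  have h := Real.log_le_sub_one_of_pos (x := x/(x+1)) (by positivity)
  rw [Real.log_div (by positivity) (by positivity)] at h
  have : x/(x+1) - 1 = -(1/(x+1)) := by field_simp; ring
  rw [this] at h
  linarith

lemma sum_inv_lower (c : ℝ) (hc : 1 ≤ c) (a b : ℕ) (hab : a ≤ b) :
    Real.log ((b:ℝ)+1+c) - Real.log ((a:ℝ)+c) ≤ ∑ k ∈ Icc a b, 1/((k:ℝ)+c) := by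
  have h := tele (fun k => Real.log ((k:ℝ)+c)) a b (by omega)
  calc Real.log ((b:ℝ)+1+c) - Real.log ((a:ℝ)+c)
      = ∑ k ∈ Icc a b, (Real.log ((k:ℝ)+1+c) - Real.log ((k:ℝ)+c)) := by
        push_cast at h; rw [h]
    _ ≤ ∑ k ∈ Icc a b, 1/((k:ℝ)+c) := by
        apply Finset.sum_le_sum
        intro k hk
        have hkc : (0:ℝ) < (k:ℝ) + c := by positivity
        have := log_succ_le ((k:ℝ)+c) hkc
        calc Real.log ((k:ℝ)+1+c) - Real.log ((k:ℝ)+c)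
            = Real.log (((k:ℝ)+c)+1) - Real.log ((k:ℝ)+c) := by ring_nf
          _ ≤ 1/((k:ℝ)+c) := this

lemma sum_inv_upper (c : ℝ) (hc : 1 ≤ c) (a b : ℕ) (ha : 1 ≤ a) (hab : a ≤ b) :
    ∑ k ∈ Icc a b, 1/((k:ℝ)+c) ≤ Real.log ((b:ℝ)+c) - Real.log ((a:ℝ)+c-1) := by
  have h := tele (fun k => Real.log ((k:ℝ)+c-1)) a b (by omega)
  calc ∑ k ∈ Icc a b, 1/((k:ℝ)+c)
      ≤ ∑ k ∈ Icc a b, (Real.log ((k:ℝ)+1+c-1) - Real.log ((k:ℝ)+c-1)) := by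
        apply Finset.sum_le_sum
        intro k hk
        have hk1 : 1 ≤ k := le_trans ha (Finset.mem_Icc.mp hk).1
        have hkc : (0:ℝ) < (k:ℝ)+c-1 := by
          have : (1:ℝ) ≤ (k:ℝ) := by exact_mod_cast hk1
          linarith
        have := le_log_succ ((k:ℝ)+c-1) hkc
        calc 1/((k:ℝ)+c) = 1/(((k:ℝ)+c-1)+1) := by ring_nf
          _ ≤ Real.log (((k:ℝ)+c-1)+1) - Real.log ((k:ℝ)+c-1) := this
          _ = Real.log ((k:ℝ)+1+c-1) - Real.log ((k:ℝ)+c-1) := by ring_nf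
    _ = Real.log ((b:ℝ)+c) - Real.log ((a:ℝ)+c-1) := by
        push_cast at h; rw [h]; ring_nf

lemma L1bound (c : ℝ) (hc : 1 ≤ c) (t : ℕ) (ht : 2 ≤ t) :
    |(∑ k ∈ Icc t (t^2), 1/((k:ℝ)+c)) - Real.log t| ≤ Real.log (1+c) := by
  have hab : t ≤ t^2 := Nat.le_self_pow (by norm_num) t
  have hT : (2:ℝ) ≤ (t:ℝ) := by exact_mod_cast ht
  have hT0 : (0:ℝ) < (t:ℝ) := by linarith
  have lower := sum_inv_lower c hc t (t^2) hab
  have upper := sum_inv_upper c hc t (t^2) (by omega) hab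
  push_cast at lower upper
  have hlogsq : Real.log ((t:ℝ)^2) = 2 * Real.log t := by
    rw [Real.log_pow]; norm_num
  have h1 : Real.log ((t:ℝ)^2) ≤ Real.log ((t:ℝ)^2+1+c) :=
    Real.log_le_log (by positivity) (by linarith)
  have h2 : Real.log ((t:ℝ)+c) ≤ Real.log t + Real.log (1+c) := by
    rw [← Real.log_mul (by positivity) (by positivity)]
    exact Real.log_le_log (by linarith) (by nlinarith)
  have h4 : Real.log ((t:ℝ)^2+c) ≤ 2 * Real.log t + Real.log (1+c) := by
    rw [← hlogsq, ← Real.log_mul (by positivity) (by positivity)]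
    refine Real.log_le_log (by positivity) ?_
    nlinarith [mul_nonneg (by nlinarith : (0:ℝ) ≤ (t:ℝ)^2 - 1) (by linarith : (0:ℝ) ≤ c)]
  have h5 : Real.log (t:ℝ) ≤ Real.log ((t:ℝ)+c-1) :=
    Real.log_le_log hT0 (by linarith)
  rw [abs_le]
  constructor <;> linarith

lemma L2bound (n : ℕ) (hn : 1 ≤ n) (A : ℝ) (hA : 2 ≤ A) (t : ℕ) (ht : 2 ≤ t) :
    |(∑ k ∈ Icc t (t^2 - n), 1/((k:ℝ)+A)) - Real.log t|
      ≤ Real.log 2 + Real.log (1+A) + Real.log (4*(n:ℝ)^2+A) + Real.log (2*(n:ℝ)) := by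
  have hN : (1:ℝ) ≤ (n:ℝ) := by exact_mod_cast hn
  have hT : (2:ℝ) ≤ (t:ℝ) := by exact_mod_cast ht
  have hT0 : (0:ℝ) < (t:ℝ) := by linarith
  have hlog2 : (0:ℝ) ≤ Real.log 2 := Real.log_nonneg (by norm_num)
  have hlogA : (0:ℝ) ≤ Real.log (1+A) := Real.log_nonneg (by linarith)
  have hlog4 : (0:ℝ) ≤ Real.log (4*(n:ℝ)^2+A) := Real.log_nonneg (by nlinarith)
  have hlog2n : (0:ℝ) ≤ Real.log (2*(n:ℝ)) := Real.log_nonneg (by linarith)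
  have hlogsq : Real.log ((t:ℝ)^2) = 2 * Real.log t := by
    rw [Real.log_pow]; norm_num
  rcases lt_or_ge (t^2 - n) t with hempty | hab
  · -- empty sum; t < n
    rw [Finset.Icc_eq_empty (not_le.mpr hempty), Finset.sum_empty]
    have h2t : 2*t ≤ t^2 := by nlinarith
    have htn : t < n := by omega
    have htnR : Real.log (t:ℝ) ≤ Real.log (2*(n:ℝ)) := by
      refine Real.log_le_log hT0 ?_
      have : (t:ℝ) ≤ (n:ℝ) := by exact_mod_cast htn.le
      linarith
    rw [zero_sub, abs_neg, abs_of_nonneg (Real.log_nonneg (by linarith))]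
    linarith
  · have hnle : n ≤ t^2 := by omega
    have hcast : ((t^2 - n : ℕ) : ℝ) = (t:ℝ)^2 - n := by
      push_cast [Nat.cast_sub hnle]; ring
    have lower := sum_inv_lower A (by linarith) t (t^2 - n) hab
    have upper := sum_inv_upper A (by linarith) t (t^2 - n) (by omega) hab
    rw [hcast] at lower upper
    have h5 : Real.log (t:ℝ) ≤ Real.log ((t:ℝ)+A-1) :=
      Real.log_le_log hT0 (by linarith)
    have hnR : (n:ℝ) ≤ (t:ℝ)^2 := by exact_mod_cast hnle
    have ht4 : (4:ℝ) ≤ (t:ℝ)^2 := by nlinarith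
    have httR : (t:ℝ) ≤ (t:ℝ)^2 := by nlinarith
    have h4 : Real.log ((t:ℝ)^2 - n + A) ≤ 2 * Real.log t + Real.log (1+A) := by
      rw [← hlogsq, ← Real.log_mul (by positivity) (by positivity)]
      refine Real.log_le_log (by linarith) ?_
      nlinarith [mul_nonneg (by linarith : (0:ℝ) ≤ (t:ℝ)^2 - 1) (by linarith : (0:ℝ) ≤ A)]
    rcases le_or_gt (2*n) t with h2n | h2n
    · -- main case
      have h2nR : 2*(n:ℝ) ≤ (t:ℝ) := by exact_mod_cast h2n
      have hhalf : (t:ℝ)^2/2 ≤ (t:ℝ)^2 - n + 1 + A := by nlinarith [httR, h2nR]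
      have h1 : 2 * Real.log t - Real.log 2 ≤ Real.log ((t:ℝ)^2 - n + 1 + A) := by
        rw [← hlogsq]
        have : Real.log ((t:ℝ)^2/2) ≤ Real.log ((t:ℝ)^2 - n + 1 + A) :=
          Real.log_le_log (by positivity) hhalf
        rw [Real.log_div (by positivity) (by norm_num)] at this
        linarith
      have h2 : Real.log ((t:ℝ)+A) ≤ Real.log t + Real.log (1+A) := by
        rw [← Real.log_mul (by positivity) (by positivity)]
        refine Real.log_le_log (by linarith) ?_
        nlinarith [mul_nonneg (by linarith : (0:ℝ) ≤ (t:ℝ) - 1) (by linarith : (0:ℝ) ≤ A)]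
      rw [abs_le]
      constructor <;> linarith
    · -- t < 2n
      have h2nR : (t:ℝ) < 2*(n:ℝ) := by exact_mod_cast h2n
      have hlogt : Real.log (t:ℝ) ≤ Real.log (2*(n:ℝ)) :=
        Real.log_le_log hT0 (by linarith)
      have hLnn : 0 ≤ ∑ k ∈ Icc t (t^2 - n), 1/((k:ℝ)+A) := by
        apply Finset.sum_nonneg
        intro k _
        positivity
      have hup2 : Real.log ((t:ℝ)^2 - n + A) ≤ Real.log (4*(n:ℝ)^2+A) := by
        refine Real.log_le_log (by linarith) ?_
        nlinarith [mul_pos (by linarith : (0:ℝ) < 2*(n:ℝ) - t) (by linarith : (0:ℝ) < (t:ℝ) + 2*n)]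
      have h6 : 0 ≤ Real.log ((t:ℝ)+A-1) := Real.log_nonneg (by linarith)
      rw [abs_le]
      constructor <;> linarith


lemma Rbound (A B : ℝ) (hA : 1 ≤ A) (hB : 1 ≤ B) (a b : ℕ) (ha : 1 ≤ a) :
    ∑ k ∈ Icc a b, 1/(((k:ℝ)+A)*((k:ℝ)+B)) ≤ 1 := by
  rcases lt_or_ge b a with h | h
  · rw [Finset.Icc_eq_empty (not_le.mpr h), Finset.sum_empty]; norm_num
  · have key : ∑ k ∈ Icc a b, 1/(((k:ℝ)+A)*((k:ℝ)+B))
        ≤ ∑ k ∈ Icc a b, ((-(1/((k:ℝ)+1))) - (-(1/(k:ℝ)))) := by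
      apply Finset.sum_le_sum
      intro k hk
      have hk1 : (1:ℝ) ≤ (k:ℝ) := by exact_mod_cast le_trans ha (Finset.mem_Icc.mp hk).1
      have hk0 : (k:ℝ) ≠ 0 := by linarith
      have hk10 : (k:ℝ)+1 ≠ 0 := by linarith
      have h0 : (0:ℝ) < (k:ℝ)*((k:ℝ)+1) := by nlinarith
      have heq : (-(1/((k:ℝ)+1))) - (-(1/(k:ℝ))) = 1/((k:ℝ)*((k:ℝ)+1)) := by
        field_simp
        ring
      rw [heq]
      apply one_div_le_one_div_of_le h0
      nlinarith [mul_nonneg (by linarith : (0:ℝ) ≤ (k:ℝ)) (by linarith : (0:ℝ) ≤ A+B-1)]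
    have htel := tele (fun k => -(1/(k:ℝ))) a b (by omega)
    push_cast at htel
    rw [htel] at key
    have ha1 : (1:ℝ) ≤ (a:ℝ) := by exact_mod_cast ha
    have hb1 : (0:ℝ) < 1/((b:ℝ)+1) := by positivity
    have hainv : 1/(a:ℝ) ≤ 1 := by
      rw [div_le_one (by linarith)]; linarith
    calc ∑ k ∈ Icc a b, 1/(((k:ℝ)+A)*((k:ℝ)+B)) ≤ -(1/((b:ℝ)+1)) - (-(1/(a:ℝ))) := key
      _ ≤ 1 := by linarith

/-- With the trial sequence `u_k = k+1` for `t ≤ k ≤ t²` (and `0` otherwise):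
both sums grow like a multiple of `log t` up to `O(1)`, and consequently the
hyponormality inequality for all `t` forces `C ≤ n/s`. -/
theorem stmt8 (n : ℕ) (hn : 1 ≤ n) (s : ℝ) (hs : 0 < s) :
    (∃ M : ℝ, ∀ t : ℕ, 2 ≤ t →
      |(∑ k ∈ Icc t (t ^ 2), (n : ℝ) ^ 2 / ((k : ℝ) + n + 1))
        - (n : ℝ) ^ 2 * Real.log t| ≤ M)
    ∧ (∃ M : ℝ, ∀ t : ℕ, 2 ≤ t →
      |s * n * (∑ k ∈ Icc t (t ^ 2 - n),
          ((k : ℝ) + 1) / (((k : ℝ) + n + 1 + s / 2) * ((k : ℝ) + 1 + s / 2)))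
        - s * n * Real.log t| ≤ M)
    ∧ (∀ C : ℝ, 0 ≤ C →
      (∀ t : ℕ, 2 ≤ t →
        (∑ k ∈ Icc t (t ^ 2), (n : ℝ) ^ 2 / ((k : ℝ) + n + 1))
          ≥ s * n * C * ∑ k ∈ Icc t (t ^ 2 - n),
              ((k : ℝ) + 1) / (((k : ℝ) + n + 1 + s / 2) * ((k : ℝ) + 1 + s / 2)))
      → C ≤ n / s) := by
  have hN : (1:ℝ) ≤ (n:ℝ) := by exact_mod_cast hn
  set A : ℝ := (n:ℝ)+1+s/2 with hAdef
  have hA2 : 2 ≤ A := by rw [hAdef]; linarith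
  set M1 : ℝ := (n:ℝ)^2 * Real.log (1+((n:ℝ)+1)) with hM1
  set K2 : ℝ := Real.log 2 + Real.log (1+A) + Real.log (4*(n:ℝ)^2+A) + Real.log (2*(n:ℝ))
    with hK2
  have hK2nn : 0 ≤ K2 := by
    rw [hK2]
    have h1 : (0:ℝ) ≤ Real.log 2 := Real.log_nonneg (by norm_num)
    have h2 : (0:ℝ) ≤ Real.log (1+A) := Real.log_nonneg (by linarith)
    have h3 : (0:ℝ) ≤ Real.log (4*(n:ℝ)^2+A) := Real.log_nonneg (by nlinarith)
    have h4 : (0:ℝ) ≤ Real.log (2*(n:ℝ)) := Real.log_nonneg (by linarith)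
    linarith
  have part1 : ∀ t : ℕ, 2 ≤ t →
      |(∑ k ∈ Icc t (t ^ 2), (n : ℝ) ^ 2 / ((k : ℝ) + n + 1))
        - (n : ℝ)^2 * Real.log t| ≤ M1 := by
    intro t ht
    have hrw : ∑ k ∈ Icc t (t^2), (n:ℝ)^2/((k:ℝ)+n+1)
        = (n:ℝ)^2 * ∑ k ∈ Icc t (t^2), 1/((k:ℝ)+((n:ℝ)+1)) := by
      rw [Finset.mul_sum]
      apply Finset.sum_congr rfl
      intro k _
      rw [mul_one_div]
      ring_nf
    rw [hrw, ← mul_sub, abs_mul, abs_of_nonneg (by positivity : (0:ℝ) ≤ (n:ℝ)^2)]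
    exact mul_le_mul_of_nonneg_left (L1bound ((n:ℝ)+1) (by linarith) t ht) (by positivity)
  have part2 : ∀ t : ℕ, 2 ≤ t →
      |(∑ k ∈ Icc t (t ^ 2 - n),
          ((k : ℝ) + 1) / (((k : ℝ) + n + 1 + s / 2) * ((k : ℝ) + 1 + s / 2)))
        - Real.log t| ≤ K2 + s/2 := by
    intro t ht
    have hdecomp : ∑ k ∈ Icc t (t^2-n),
          ((k:ℝ)+1)/(((k:ℝ)+n+1+s/2)*((k:ℝ)+1+s/2))
        = (∑ k ∈ Icc t (t^2-n), 1/((k:ℝ)+A))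
          - (s/2) * ∑ k ∈ Icc t (t^2-n), 1/(((k:ℝ)+A)*((k:ℝ)+(1+s/2))) := by
      rw [Finset.mul_sum, ← Finset.sum_sub_distrib]
      apply Finset.sum_congr rfl
      intro k _
      have hk0 : (0:ℝ) ≤ (k:ℝ) := Nat.cast_nonneg k
      have h1 : (0:ℝ) < (k:ℝ)+A := by linarith
      have h2 : (0:ℝ) < (k:ℝ)+(1+s/2) := by linarith
      have hA' : (k:ℝ)+n+1+s/2 = (k:ℝ)+A := by rw [hAdef]; ring
      have hB' : (k:ℝ)+1+s/2 = (k:ℝ)+(1+s/2) := by ring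
      rw [hA', hB']
      field_simp
      ring
    have hR0 : 0 ≤ ∑ k ∈ Icc t (t^2-n), 1/(((k:ℝ)+A)*((k:ℝ)+(1+s/2))) := by
      apply Finset.sum_nonneg
      intro k _
      have hk0 : (0:ℝ) ≤ (k:ℝ) := Nat.cast_nonneg k
      have h1 : (0:ℝ) < (k:ℝ)+A := by linarith
      have h2 : (0:ℝ) < (k:ℝ)+(1+s/2) := by linarith
      positivity
    have hR1 : ∑ k ∈ Icc t (t^2-n), 1/(((k:ℝ)+A)*((k:ℝ)+(1+s/2))) ≤ 1 :=
      Rbound A (1+s/2) (by linarith) (by linarith) t (t^2-n) (by omega)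
    have hL := L2bound n hn A hA2 t ht
    rw [hdecomp]
    have habs : |(s/2) * ∑ k ∈ Icc t (t^2-n), 1/(((k:ℝ)+A)*((k:ℝ)+(1+s/2)))| ≤ s/2 := by
      rw [abs_mul, abs_of_nonneg (by linarith : (0:ℝ) ≤ s/2), abs_of_nonneg hR0]
      nlinarith
    calc |((∑ k ∈ Icc t (t^2-n), 1/((k:ℝ)+A))
          - (s/2) * ∑ k ∈ Icc t (t^2-n), 1/(((k:ℝ)+A)*((k:ℝ)+(1+s/2)))) - Real.log t|
        = |((∑ k ∈ Icc t (t^2-n), 1/((k:ℝ)+A)) - Real.log t)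
          - (s/2) * ∑ k ∈ Icc t (t^2-n), 1/(((k:ℝ)+A)*((k:ℝ)+(1+s/2)))| := by congr 1; ring
      _ ≤ |(∑ k ∈ Icc t (t^2-n), 1/((k:ℝ)+A)) - Real.log t|
          + |(s/2) * ∑ k ∈ Icc t (t^2-n), 1/(((k:ℝ)+A)*((k:ℝ)+(1+s/2)))| := abs_sub _ _
      _ ≤ K2 + s/2 := by rw [hK2]; exact add_le_add hL habs
  have hsn : (0:ℝ) < s * n := by positivity
  refine ⟨⟨M1, part1⟩, ⟨s*n*(K2+s/2), ?_⟩, ?_⟩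
  · intro t ht
    have := part2 t ht
    rw [← mul_sub, abs_mul, abs_of_nonneg hsn.le]
    exact mul_le_mul_of_nonneg_left this hsn.le
  · intro C hC hineq
    by_contra hlt
    push_neg at hlt
    have hD : 0 < s*n*C - (n:ℝ)^2 := by
      have h1 : (n:ℝ)/s < C := hlt
      have h2 : (n:ℝ) < C * s := by
        rw [div_lt_iff₀ hs] at h1; linarith
      nlinarith
    set D : ℝ := s*n*C - (n:ℝ)^2 with hDdef
    set Bnd : ℝ := M1 + s*n*C*(K2+s/2) with hBnd
    have key : ∀ t : ℕ, 2 ≤ t → D * Real.log t ≤ Bnd := by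
      intro t ht
      have h1 := part1 t ht
      have h2 := part2 t ht
      rw [abs_le] at h1 h2
      have hS1 : (∑ k ∈ Icc t (t ^ 2), (n : ℝ) ^ 2 / ((k : ℝ) + n + 1))
          ≤ (n:ℝ)^2 * Real.log t + M1 := by linarith [h1.2]
      have hS2 : Real.log t - (K2 + s/2)
          ≤ ∑ k ∈ Icc t (t ^ 2 - n),
            ((k : ℝ) + 1) / (((k : ℝ) + n + 1 + s / 2) * ((k : ℝ) + 1 + s / 2)) := by
        linarith [h2.1]
      have h3 := hineq t ht
      have h4 : s*n*C * (Real.log t - (K2 + s/2))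
          ≤ s*n*C * ∑ k ∈ Icc t (t ^ 2 - n),
            ((k : ℝ) + 1) / (((k : ℝ) + n + 1 + s / 2) * ((k : ℝ) + 1 + s / 2)) :=
        mul_le_mul_of_nonneg_left hS2 (by positivity)
      rw [hDdef, hBnd]
      nlinarith
    set X : ℝ := (Bnd + 1)/D with hX
    set t : ℕ := max 2 ⌈Real.exp X⌉₊ with htdef
    have ht2 : 2 ≤ t := le_max_left _ _
    have htX : Real.exp X ≤ (t:ℝ) := by
      calc Real.exp X ≤ (⌈Real.exp X⌉₊ : ℝ) := Nat.le_ceil _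
        _ ≤ (t:ℝ) := by exact_mod_cast le_max_right 2 ⌈Real.exp X⌉₊
    have hlog : X ≤ Real.log t := by
      have := Real.log_le_log (Real.exp_pos X) htX
      rwa [Real.log_exp] at this
    have := key t ht2
    have hDX : D * X = Bnd + 1 := by
      rw [hX]; field_simp
    nlinarith [mul_le_mul_of_nonneg_left hlog hD.le]
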